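/- Suppose there is a finite subgraph G_K of G and C > 0 such that C‖(f,φ)‖_W ≤ ‖D(f,φ)‖_{ℓ²(G)} for all (f,φ) finitely supported in (V∖K) × (E∖E_K). Then D : W → ℓ²(G) is semi-Fredholm: its kernel is finite-dimensional and its range is closed. -/

import Mathlib

open scoped BigOperators
open Function Filter

structure WGraph (V : Type*) where
  E : Set (V × V)
  symm : ∀ e ∈ E, (e.2, e.1) ∈ E
  noloop : ∀ v : V, (v, v) ∉ E
  c : V → ℝ
  r : V × V → ℝ
  cpos : ∀ v, 0 < c v
  rpos : ∀ e, 0 < r e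
  rsymm : ∀ e : V × V, r (e.2, e.1) = r e
  locfin : ∀ v : V, {e : V × V | e ∈ E ∧ e.1 = v}.Finite

variable {V : Type*}

/-- The difference operator `(df)(e) = f(e⁺) - f(e⁻)`. -/
def dOp (f : V → ℝ) : V × V → ℝ := fun e => f e.2 - f e.1

/-- The coboundary operator `(δφ)(x) = (1/c x) Σ_{e ∈ E, e⁺ = x} r e * φ e`. -/
noncomputable def deltaOp (G : WGraph V) (φ : V × V → ℝ) : V → ℝ :=
  fun x => (G.c x)⁻¹ * ∑ᶠ e ∈ {e : V × V | e ∈ G.E ∧ e.2 = x}, G.r e * φ e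

/-- Skewsymmetric function on oriented edges. -/
def Skew (φ : V × V → ℝ) : Prop := ∀ e : V × V, φ (e.2, e.1) = -φ e

/-- Finitely supported function. -/
def FinSupp {α β : Type*} [Zero β] (f : α → β) : Prop := (Function.support f).Finite

/-- Connectedness of a graph: any two vertices joined by a path of edges. -/
def WGraph.Connected (G : WGraph V) : Prop :=
  ∀ x y : V, ∃ n : ℕ, ∃ p : ℕ → V, p 0 = x ∧ p n = y ∧ ∀ i < n, (p i, p (i + 1)) ∈ G.E

/-- Inner product on vertex functions: `Σ_x c x * f x * g x`. -/
noncomputable def innerV (G : WGraph V) (f g : V → ℝ) : ℝ := ∑ᶠ x : V, G.c x * (f x * g x)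

/-- Inner product on edge functions: `(1/2) Σ_{e ∈ E} r e * φ e * ψ e`. -/
noncomputable def innerE (G : WGraph V) (φ ψ : V × V → ℝ) : ℝ :=
  (1 / 2) * ∑ᶠ e ∈ G.E, G.r e * (φ e * ψ e)

/-- Squared ℓ² norm of the pair `(f, φ)` restricted to vertices in `S` and edges in `T`. -/
noncomputable def sqnormOn (G : WGraph V) (S : Set V) (T : Set (V × V)) (f : V → ℝ)
    (φ : V × V → ℝ) : ℝ :=
  (∑ᶠ x ∈ S, G.c x * f x ^ 2) + (1 / 2) * ∑ᶠ e ∈ T, G.r e * φ e ^ 2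

/-- Edges of the subgraph induced by `K`. -/
def EK (G : WGraph V) (K : Set V) : Set (V × V) := {e ∈ G.E | e.1 ∈ K ∧ e.2 ∈ K}

/-- Edge boundary of `K`: edges with exactly one endpoint in `K`. -/
def edgeBdry (G : WGraph V) (K : Set V) : Set (V × V) :=
  {e ∈ G.E | (e.1 ∈ K ∧ e.2 ∉ K) ∨ (e.1 ∉ K ∧ e.2 ∈ K)}

/-- `D = d + δ` is non-parabolic at infinity with respect to the finite subgraph on `K`. -/
noncomputable def NonParabolicAt (G : WGraph V) (K : Set V) : Prop :=
  ∀ VU : Set V, ∀ EU : Set (V × V), VU.Finite → EU.Finite →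
    VU ⊆ Kᶜ → EU ⊆ G.E \ EK G K →
    ∃ C > 0, ∀ f : V → ℝ, ∀ φ : V × V → ℝ,
      FinSupp f → FinSupp φ → Skew φ →
      Function.support f ⊆ Kᶜ → Function.support φ ⊆ G.E \ EK G K →
      C * Real.sqrt (sqnormOn G VU EU f φ) ≤
        Real.sqrt (sqnormOn G Kᶜ (G.E \ EK G K) (deltaOp G φ) (dOp f))

/-- `(Kt, Et)` is a (finite-subgraph) neighborhood of the subgraph on `K`. -/
def IsNbhd (G : WGraph V) (K Kt : Set V) (Et : Set (V × V)) : Prop :=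
  Kt.Finite ∧ Et.Finite ∧ K ⊆ Kt ∧ EK G K ∪ edgeBdry G K ⊆ Et ∧ Et ⊆ G.E ∧
    ∀ e ∈ Et, e.1 ∈ Kt ∧ e.2 ∈ Kt

/-- Existence of a cycle in the graph. -/
def HasCycle (G : WGraph V) : Prop :=
  ∃ n : ℕ, 3 ≤ n ∧ ∃ p : ℕ → V, p n = p 0 ∧
    (∀ i j : ℕ, i < n → j < n → p i = p j → i = j) ∧ ∀ i < n, (p i, p (i + 1)) ∈ G.E

/-- The outward edges of generation `m` in the two binary subtrees (`Ev` and `Bv` sides)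
emanating from the vertex `x₀` of the triadic tree. -/
def genEdges (x₀ : V) (Ev Bv : ℕ → ℕ → V) : ℕ → Set (V × V)
  | 0 => {(x₀, Ev 0 0), (x₀, Bv 0 0)}
  | m + 1 => {p | ∃ k, k < 2 ^ (m + 1) ∧
      (p = (Ev m (k / 2), Ev (m + 1) k) ∨ p = (Bv m (k / 2), Bv (m + 1) k))}

/-- A set of oriented edges together with all reversed edges. -/
def symEdges (S : Set (V × V)) : Set (V × V) := {p | p ∈ S ∨ (p.2, p.1) ∈ S}

/-- Submodule of functions supported in a set. -/
def suppSub {α : Type*} (s : Set α) : Submodule ℝ (α → ℝ) where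
  carrier := {f | Function.support f ⊆ s}
  zero_mem' := by simp
  add_mem' {a b} ha hb := (Function.support_add a b).trans (Set.union_subset ha hb)
  smul_mem' c f hf := (Function.support_const_smul_subset c f).trans hf

lemma suppSub_findim {α : Type*} {s : Set α} (hs : s.Finite) :
    FiniteDimensional ℝ (suppSub s) := by
  haveI := hs.fintype
  refine FiniteDimensional.of_injective
    ({ toFun := fun f => fun x : s => f.1 x
       map_add' := fun a b => rfl
       map_smul' := fun c a => rfl } : suppSub s →ₗ[ℝ] (s → ℝ)) ?_
  intro a b hab
  ext x
  by_cases hx : x ∈ s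
  · exact congrFun hab ⟨x, hx⟩
  · have ha : a.1 x = 0 := by
      by_contra h; exact hx (a.2 (Function.mem_support.mpr h))
    have hb : b.1 x = 0 := by
      by_contra h; exact hx (b.2 (Function.mem_support.mpr h))
    rw [ha, hb]

/-- The submodule of admissible pairs supported away from `K`. -/
def M0 (G : WGraph V) (K : Set V) : Submodule ℝ ((V → ℝ) × (V × V → ℝ)) where
  carrier := {p | FinSupp p.1 ∧ FinSupp p.2 ∧ Skew p.2 ∧ Function.support p.2 ⊆ G.E ∧
    Function.support p.1 ⊆ Kᶜ ∧ Function.support p.2 ⊆ (EK G K)ᶜ}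
  zero_mem' := by
    refine ⟨?_, ?_, ?_, ?_, ?_, ?_⟩ <;>
      simp [FinSupp, Skew, Function.support_zero, Prod.fst_zero, Prod.snd_zero]
  add_mem' := by
    rintro a b ⟨ha1, ha2, ha3, ha4, ha5, ha6⟩ ⟨hb1, hb2, hb3, hb4, hb5, hb6⟩
    refine ⟨(ha1.union hb1).subset (Function.support_add _ _),
      (ha2.union hb2).subset (Function.support_add _ _),
      fun e => by simp [Pi.add_apply, ha3 e, hb3 e]; ring,
      (Function.support_add _ _).trans (Set.union_subset ha4 hb4),
      (Function.support_add _ _).trans (Set.union_subset ha5 hb5),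
      (Function.support_add _ _).trans (Set.union_subset ha6 hb6)⟩
  smul_mem' := by
    rintro c p ⟨h1, h2, h3, h4, h5, h6⟩
    refine ⟨h1.subset (Function.support_const_smul_subset c _),
      h2.subset (Function.support_const_smul_subset c _),
      fun e => by simp [Pi.smul_apply, h3 e],
      (Function.support_const_smul_subset c _).trans h4,
      (Function.support_const_smul_subset c _).trans h5,
      (Function.support_const_smul_subset c _).trans h6⟩

lemma EK_finite (G : WGraph V) {K : Set V} (hK : K.Finite) : (EK G K).Finite := by
  refine Set.Finite.subset (hK.biUnion (fun v _ => G.locfin v)) ?_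
  rintro e ⟨heE, heK, -⟩
  exact Set.mem_biUnion heK ⟨heE, rfl⟩

lemma EK_symm (G : WGraph V) (K : Set V) {e : V × V} (he : e ∈ EK G K) :
    (e.2, e.1) ∈ EK G K :=
  ⟨G.symm e he.1, he.2.2, he.2.1⟩

lemma skew_indicator (G : WGraph V) (K : Set V) {φ : V × V → ℝ} (hφ : Skew φ)
    (T : Set (V × V)) (hT : ∀ e ∈ T, (e.2, e.1) ∈ T) (hT' : ∀ e, (e.2, e.1) ∈ T → e ∈ T) :
    Skew (T.indicator φ) := by
  intro e
  by_cases he : e ∈ T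
  · rw [Set.indicator_of_mem (hT e he), Set.indicator_of_mem he, hφ e]
  · rw [Set.indicator_of_notMem (fun h => he (hT' e h)), Set.indicator_of_notMem he, neg_zero]

/-- A closed submodule plus a finite-dimensional one is closed. -/
lemma sup_closed {E : Type*} [NormedAddCommGroup E] [NormedSpace ℝ E]
    (p q : Submodule ℝ E) (hp : IsClosed (p : Set E)) (hq : FiniteDimensional ℝ q) :
    IsClosed ((p ⊔ q : Submodule ℝ E) : Set E) := by
  haveI : IsClosed (p : Set E) := hp
  haveI : FiniteDimensional ℝ q := hq
  have hmap : FiniteDimensional ℝ (Submodule.map p.mkQ q) := Module.Finite.map _ _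
  have hclosed : IsClosed ((Submodule.map p.mkQ q : Submodule ℝ (E ⧸ p)) : Set (E ⧸ p)) :=
    Submodule.closed_of_finiteDimensional _
  have hcomap : Submodule.comap p.mkQ (Submodule.map p.mkQ q) = p ⊔ q := by
    rw [Submodule.comap_map_eq, Submodule.ker_mkQ, sup_comm]
  have hcont : Continuous p.mkQ := continuous_quot_mk
  have : IsClosed (p.mkQ ⁻¹' (Submodule.map p.mkQ q : Set (E ⧸ p))) :=
    hclosed.preimage hcont
  rwa [← Submodule.comap_coe, hcomap] at this

/-- the coercivity estimate outside a finite subgraph implies that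
`D : W → ℓ²(G)` is semi-Fredholm. -/
theorem stmt11 (G : WGraph V) [Infinite V] (hconn : G.Connected)
    {W H : Type*} [NormedAddCommGroup W] [InnerProductSpace ℝ W] [CompleteSpace W]
    [NormedAddCommGroup H] [InnerProductSpace ℝ H] [CompleteSpace H]
    (j : ((V → ℝ) × (V × V → ℝ)) →ₗ[ℝ] W)
    (emb : ((V → ℝ) × (V × V → ℝ)) →ₗ[ℝ] H)
    (D : W →L[ℝ] H)
    (S : Set ((V → ℝ) × (V × V → ℝ)))
    (hS : S = {p | FinSupp p.1 ∧ FinSupp p.2 ∧ Skew p.2 ∧ Function.support p.2 ⊆ G.E})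
    (hdense : Dense (j '' S))
    (ι : W →L[ℝ] ((V → ℝ) × (V × V → ℝ)))
    (hι : ∀ p ∈ S, ι (j p) = p)
    (hemb : ∀ p ∈ S, ‖emb p‖ = Real.sqrt (sqnormOn G Set.univ G.E p.1 p.2))
    (hD : ∀ p ∈ S, D (j p) = emb (deltaOp G p.2, dOp p.1))
    (K : Set V) (hK : K.Finite) (C : ℝ) (hC : 0 < C)
    (hineq : ∀ f : V → ℝ, ∀ φ : V × V → ℝ,
      FinSupp f → FinSupp φ → Skew φ → Function.support φ ⊆ G.E →
      Function.support f ⊆ Kᶜ → Function.support φ ⊆ (EK G K)ᶜ →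
      C * ‖j (f, φ)‖ ≤ ‖D (j (f, φ))‖) :
    FiniteDimensional ℝ (LinearMap.ker (D : W →ₗ[ℝ] H)) ∧ IsClosed (Set.range D) := by
  classical
  have hEK : (EK G K).Finite := EK_finite G hK
  -- The closed subspace on which D is bounded below
  set W₀ : Submodule ℝ W := (Submodule.map j (M0 G K)).topologicalClosure with hW₀def
  have hW₀closed : IsClosed (W₀ : Set W) := Submodule.isClosed_topologicalClosure _
  -- the bound on W₀
  have hbound : ∀ w ∈ W₀, C * ‖w‖ ≤ ‖D w‖ := by
    have hcl : IsClosed {w : W | C * ‖w‖ ≤ ‖D w‖} :=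
      isClosed_le (continuous_const.mul continuous_norm) (D.continuous.norm)
    have hsub : (Submodule.map j (M0 G K) : Set W) ⊆ {w : W | C * ‖w‖ ≤ ‖D w‖} := by
      rintro w ⟨p, hp, rfl⟩
      obtain ⟨h1, h2, h3, h4, h5, h6⟩ := hp
      have := hineq p.1 p.2 h1 h2 h3 h4 h5 h6
      simpa using this
    intro w hw
    have : w ∈ closure (Submodule.map j (M0 G K) : Set W) := by
      rwa [← Submodule.topologicalClosure_coe]
    exact hcl.closure_subset_iff.mpr hsub this
  -- the finite-dimensional complement
  set F0 : Submodule ℝ ((V → ℝ) × (V × V → ℝ)) := (suppSub K).prod (suppSub (EK G K)) with hF0def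
  haveI hF0fin : FiniteDimensional ℝ F0 := by
    haveI := suppSub_findim (s := K) hK
    haveI := suppSub_findim (s := EK G K) hEK
    refine FiniteDimensional.of_injective
      ({ toFun := fun x => (⟨x.1.1, x.2.1⟩, ⟨x.1.2, x.2.2⟩)
         map_add' := fun a b => rfl
         map_smul' := fun c a => rfl } :
        F0 →ₗ[ℝ] (suppSub K) × (suppSub (EK G K))) ?_
    intro a b hab
    simp only [LinearMap.coe_mk, AddHom.coe_mk, Prod.ext_iff, Subtype.ext_iff] at hab ⊢
    exact ⟨hab.1, hab.2⟩
  set Fw : Submodule ℝ W := Submodule.map j F0 with hFwdef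
  haveI hFwfin : FiniteDimensional ℝ Fw := Module.Finite.map _ _
  -- W₀ ⊔ Fw = ⊤
  have hjS : j '' S ⊆ ((W₀ ⊔ Fw : Submodule ℝ W) : Set W) := by
    rintro w ⟨p, hp, rfl⟩
    rw [hS] at hp
    obtain ⟨h1, h2, h3, h4⟩ := hp
    set p₀ : (V → ℝ) × (V × V → ℝ) := (Kᶜ.indicator p.1, (EK G K)ᶜ.indicator p.2) with hp₀
    set p₁ : (V → ℝ) × (V × V → ℝ) := (K.indicator p.1, (EK G K).indicator p.2) with hp₁
    have hsum : p₀ + p₁ = p := by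
      ext x
      · show Kᶜ.indicator p.1 x + K.indicator p.1 x = p.1 x
        rw [add_comm]
        exact congrFun (Set.indicator_self_add_compl K p.1) x
      · show (EK G K)ᶜ.indicator p.2 x + (EK G K).indicator p.2 x = p.2 x
        rw [add_comm]
        exact congrFun (Set.indicator_self_add_compl (EK G K) p.2) x
    have hmem₀ : p₀ ∈ M0 G K := by
      refine ⟨h1.subset ?_, h2.subset ?_, ?_, ?_, ?_, ?_⟩
      · rw [Set.support_indicator]; exact Set.inter_subset_right
      · rw [Set.support_indicator]; exact Set.inter_subset_right
      · exact skew_indicator G K h3 _ (fun e he h => he (EK_symm G K h))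
          (fun e he => fun h => he (EK_symm G K h))
      · rw [Set.support_indicator]
        exact Set.inter_subset_right.trans h4
      · rw [Set.support_indicator]; exact Set.inter_subset_left
      · rw [Set.support_indicator]; exact Set.inter_subset_left
    have hmem₁ : p₁ ∈ F0 := by
      constructor
      · show Function.support (K.indicator p.1) ⊆ K
        rw [Set.support_indicator]; exact Set.inter_subset_left
      · show Function.support ((EK G K).indicator p.2) ⊆ EK G K
        rw [Set.support_indicator]; exact Set.inter_subset_left
    refine Submodule.mem_sup.mpr ⟨j p₀, ?_, j p₁, ?_, ?_⟩
    · exact Submodule.le_topologicalClosure _ (Submodule.mem_map_of_mem hmem₀)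
    · exact Submodule.mem_map_of_mem hmem₁
    · rw [← map_add, hsum]
  have hsupclosed : IsClosed ((W₀ ⊔ Fw : Submodule ℝ W) : Set W) :=
    sup_closed W₀ Fw hW₀closed hFwfin
  have htop : W₀ ⊔ Fw = ⊤ := by
    rw [Submodule.eq_top_iff']
    intro x
    have hx : x ∈ closure (j '' S) := hdense x
    exact hsupclosed.closure_subset_iff.mpr hjS hx
  -- kernel is finite dimensional
  haveI hquot : FiniteDimensional ℝ (W ⧸ W₀) := by
    refine Module.Finite.of_surjective (W₀.mkQ.comp Fw.subtype) ?_
    rw [← LinearMap.range_eq_top, LinearMap.range_comp, Submodule.range_subtype]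
    have h1 : Submodule.map W₀.mkQ (W₀ ⊔ Fw) = ⊤ := by
      rw [htop, Submodule.map_top, Submodule.range_mkQ]
    rw [Submodule.map_sup] at h1
    have h2 : Submodule.map W₀.mkQ W₀ = ⊥ := by
      rw [Submodule.eq_bot_iff]
      rintro y ⟨z, hz, rfl⟩
      simpa [Submodule.Quotient.mk_eq_zero] using hz
    rwa [h2, bot_sup_eq] at h1
  have hkerfin : FiniteDimensional ℝ (LinearMap.ker (D : W →ₗ[ℝ] H)) := by
    refine FiniteDimensional.of_injective (W₀.mkQ.comp (LinearMap.ker (D : W →ₗ[ℝ] H)).subtype) ?_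
    rw [← LinearMap.ker_eq_bot]
    rw [Submodule.eq_bot_iff]
    rintro ⟨x, hx⟩ hx0
    have hxW₀ : x ∈ W₀ := by
      simpa [Submodule.Quotient.mk_eq_zero] using hx0
    have hDx : D x = 0 := LinearMap.mem_ker.mp hx
    have := hbound x hxW₀
    rw [hDx, norm_zero] at this
    have hx0' : x = 0 := by
      have : ‖x‖ ≤ 0 := by nlinarith [norm_nonneg x]
      simpa using norm_le_zero_iff.mp this
    simp [hx0']
  refine ⟨hkerfin, ?_⟩
  -- range is closed
  have hDW₀ : IsClosed ((Submodule.map (D : W →ₗ[ℝ] H) W₀ : Submodule ℝ H) : Set H) := by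
    haveI : CompleteSpace W₀ := hW₀closed.completeSpace_coe
    set g : W₀ →L[ℝ] H := D.comp W₀.subtypeL with hg
    have hanti : AntilipschitzWith ⟨C, hC.le⟩⁻¹ g := by
      refine g.antilipschitz_of_bound (fun x => ?_)
      have hb := hbound x.1 x.2
      have : ‖(x : W)‖ ≤ C⁻¹ * ‖g x‖ := by
        rw [le_inv_mul_iff₀ hC]
        simpa [hg] using hb
      exact this
    have hcl := hanti.isClosed_range g.uniformContinuous
    have hrange : Set.range g = (Submodule.map (D : W →ₗ[ℝ] H) W₀ : Set H) := by
      rw [Submodule.map_coe]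
      ext y
      constructor
      · rintro ⟨x, rfl⟩; exact ⟨x.1, x.2, rfl⟩
      · rintro ⟨x, hx, rfl⟩; exact ⟨⟨x, hx⟩, rfl⟩
    rwa [hrange] at hcl
  have hrangeset : Set.range D = ((Submodule.map (D : W →ₗ[ℝ] H) W₀ ⊔ Submodule.map (D : W →ₗ[ℝ] H) Fw :
      Submodule ℝ H) : Set H) := by
    have : LinearMap.range (D : W →ₗ[ℝ] H) = Submodule.map (D : W →ₗ[ℝ] H) W₀ ⊔ Submodule.map (D : W →ₗ[ℝ] H) Fw := by
      rw [← Submodule.map_sup, htop, Submodule.map_top]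
    rw [← this]
    rfl
  rw [hrangeset]
  exact sup_closed _ _ hDW₀ (Module.Finite.map _ _)
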